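/- For every θ ≥ 0 there exists an optimal 0-1 solution (x, y, z) of the Lagrangian relaxation such that the sets E_X = {e_i : x_i = 1}, E_Y = {e_i : y_i = 1}, E_Z = {e_i : z_i = 1} are pairwise disjoint. In particular, if an optimal 0-1 solution has some index i with x_i = y_i = 1 and the modification z_i := 1, x_i := 0, y_i := 0 is feasible, then its objective value is at most the original value minus θ (so strictly smaller when θ > 0). -/

import Mathlib

open Finset

/-- Feasibility of a 0-1 solution to the Lagrangian relaxation, encoded by the
sets `EX = {i : x_i = 1}`, `EY = {i : y_i = 1}`, `EZ = {i : z_i = 1}`. -/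
def LagFeasible (n p : ℕ) (EX EY EZ : Finset (Fin n)) : Prop :=
  EX.card + EZ.card = p ∧ EY.card + EZ.card = p ∧ EX ∩ EZ = ∅ ∧ EY ∩ EZ = ∅

/-- Objective of the Lagrangian relaxation with multiplier θ. -/
noncomputable def lagObj (n p k : ℕ) (C cbar : Fin n → ℝ) (θ : ℝ)
    (EX EY EZ : Finset (Fin n)) : ℝ :=
  ∑ i ∈ EX, C i + ∑ i ∈ EY, cbar i + ∑ i ∈ EZ, (C i + cbar i - θ) +
    ((p : ℝ) - (k : ℝ)) * θ

lemma lag_transform (n p k : ℕ) (C cbar : Fin n → ℝ) (θ : ℝ)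
    (EX EY EZ : Finset (Fin n)) (hf : LagFeasible n p EX EY EZ) :
    LagFeasible n p (EX \ EY) (EY \ EX) (EZ ∪ EX ∩ EY) ∧
    (EX \ EY) ∩ (EY \ EX) = ∅ ∧ (EX \ EY) ∩ (EZ ∪ EX ∩ EY) = ∅ ∧
    (EY \ EX) ∩ (EZ ∪ EX ∩ EY) = ∅ ∧
    lagObj n p k C cbar θ (EX \ EY) (EY \ EX) (EZ ∪ EX ∩ EY)
      = lagObj n p k C cbar θ EX EY EZ - ((EX ∩ EY).card : ℝ) * θ := by
  obtain ⟨hx, hy, hxz, hyz⟩ := hf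
  have hXZ : ∀ j, j ∈ EX → j ∉ EZ := by
    intro j hj hj'
    have : j ∈ EX ∩ EZ := Finset.mem_inter.mpr ⟨hj, hj'⟩
    simp [hxz] at this
  have hYZ : ∀ j, j ∈ EY → j ∉ EZ := by
    intro j hj hj'
    have : j ∈ EY ∩ EZ := Finset.mem_inter.mpr ⟨hj, hj'⟩
    simp [hyz] at this
  have hdisjZ : Disjoint EZ (EX ∩ EY) := by
    rw [Finset.disjoint_left]
    intro a ha ha'
    exact hXZ a (Finset.mem_inter.mp ha').1 ha
  have hcardU : (EZ ∪ EX ∩ EY).card = EZ.card + (EX ∩ EY).card :=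
    Finset.card_union_of_disjoint hdisjZ
  have hcx : (EX \ EY).card + (EX ∩ EY).card = EX.card :=
    Finset.card_sdiff_add_card_inter EX EY
  have hcy : (EY \ EX).card + (EY ∩ EX).card = EY.card :=
    Finset.card_sdiff_add_card_inter EY EX
  have hinter : (EY ∩ EX).card = (EX ∩ EY).card := by rw [Finset.inter_comm]
  refine ⟨⟨by rw [hcardU]; omega, by rw [hcardU]; omega, ?_, ?_⟩, ?_, ?_, ?_, ?_⟩
  · ext a; simp only [Finset.mem_inter, Finset.mem_sdiff, Finset.mem_union,
      Finset.notMem_empty, iff_false]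
    rintro ⟨⟨ha, hb⟩, hc | hc⟩
    · exact hXZ a ha hc
    · exact hb hc.2
  · ext a; simp only [Finset.mem_inter, Finset.mem_sdiff, Finset.mem_union,
      Finset.notMem_empty, iff_false]
    rintro ⟨⟨ha, hb⟩, hc | hc⟩
    · exact hYZ a ha hc
    · exact hb hc.1
  · ext a; simp only [Finset.mem_inter, Finset.mem_sdiff,
      Finset.notMem_empty, iff_false]
    rintro ⟨⟨ha, hb⟩, hc, hd⟩
    exact hb hc
  · ext a; simp only [Finset.mem_inter, Finset.mem_sdiff, Finset.mem_union,
      Finset.notMem_empty, iff_false]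
    rintro ⟨⟨ha, hb⟩, hc | hc⟩
    · exact hXZ a ha hc
    · exact hb hc.2
  · ext a; simp only [Finset.mem_inter, Finset.mem_sdiff, Finset.mem_union,
      Finset.notMem_empty, iff_false]
    rintro ⟨⟨ha, hb⟩, hc | hc⟩
    · exact hYZ a ha hc
    · exact hb hc.1
  · unfold lagObj
    have sx : ∑ i ∈ EX \ EY, C i + ∑ i ∈ EX ∩ EY, C i = ∑ i ∈ EX, C i := by
      rw [add_comm]; exact Finset.sum_inter_add_sum_sdiff EX EY C
    have sy : ∑ i ∈ EY \ EX, cbar i + ∑ i ∈ EY ∩ EX, cbar i = ∑ i ∈ EY, cbar i := by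
      rw [add_comm]; exact Finset.sum_inter_add_sum_sdiff EY EX cbar
    have sy' : ∑ i ∈ EY ∩ EX, cbar i = ∑ i ∈ EX ∩ EY, cbar i := by
      rw [Finset.inter_comm]
    have sz : ∑ i ∈ EZ ∪ EX ∩ EY, (C i + cbar i - θ)
        = ∑ i ∈ EZ, (C i + cbar i - θ) + ∑ i ∈ EX ∩ EY, (C i + cbar i - θ) :=
      Finset.sum_union hdisjZ
    have sA : ∑ i ∈ EX ∩ EY, (C i + cbar i - θ)
        = ∑ i ∈ EX ∩ EY, C i + ∑ i ∈ EX ∩ EY, cbar i - ((EX ∩ EY).card : ℝ) * θ := by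
      rw [Finset.sum_sub_distrib, Finset.sum_add_distrib, Finset.sum_const,
        nsmul_eq_mul]
    rw [sz, sA]
    rw [sy'] at sy
    linarith

theorem lagrangian_disjoint_optimal_exists (n p k : ℕ) (hp1 : 1 ≤ p) (hpn : p ≤ n)
    (hk : k ≤ p) (C cbar : Fin n → ℝ) (hC : ∀ i, 0 ≤ C i) (hcb : ∀ i, 0 ≤ cbar i)
    (θ : ℝ) (hθ : 0 ≤ θ) :
    (∃ EX EY EZ : Finset (Fin n), LagFeasible n p EX EY EZ ∧
      EX ∩ EY = ∅ ∧ EX ∩ EZ = ∅ ∧ EY ∩ EZ = ∅ ∧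
      ∀ EX' EY' EZ' : Finset (Fin n), LagFeasible n p EX' EY' EZ' →
        lagObj n p k C cbar θ EX EY EZ ≤ lagObj n p k C cbar θ EX' EY' EZ') ∧
    (∀ (EX EY EZ : Finset (Fin n)) (i : Fin n),
      LagFeasible n p EX EY EZ → i ∈ EX → i ∈ EY →
      LagFeasible n p (EX \ {i}) (EY \ {i}) (EZ ∪ {i}) →
      lagObj n p k C cbar θ (EX \ {i}) (EY \ {i}) (EZ ∪ {i}) ≤
        lagObj n p k C cbar θ EX EY EZ - θ) := by
  classical
  constructor
  · -- existence of disjoint optimal solution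
    let S : Finset (Finset (Fin n) × Finset (Fin n) × Finset (Fin n)) :=
      Finset.univ.filter (fun t => LagFeasible n p t.1 t.2.1 t.2.2 ∧
        t.1 ∩ t.2.1 = ∅ ∧ t.1 ∩ t.2.2 = ∅ ∧ t.2.1 ∩ t.2.2 = ∅)
    have hSne : S.Nonempty := by
      obtain ⟨Z0, _, hZ0⟩ := Finset.exists_subset_card_eq (s := (Finset.univ : Finset (Fin n))) (n := p)
        (by simpa using hpn)
      refine ⟨(∅, ∅, Z0), ?_⟩
      simp only [S, Finset.mem_filter, Finset.mem_univ, true_and]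
      refine ⟨⟨by simp [hZ0], by simp [hZ0], by simp, by simp⟩, by simp, by simp, by simp⟩
    obtain ⟨t, htS, htmin⟩ := S.exists_min_image
      (fun t => lagObj n p k C cbar θ t.1 t.2.1 t.2.2) hSne
    simp only [S, Finset.mem_filter, Finset.mem_univ, true_and] at htS
    obtain ⟨hfeas, hxy, hxz, hyz⟩ := htS
    refine ⟨t.1, t.2.1, t.2.2, hfeas, hxy, hxz, hyz, ?_⟩
    intro EX' EY' EZ' hf'
    obtain ⟨hf'', d1, d2, d3, hobj⟩ := lag_transform n p k C cbar θ EX' EY' EZ' hf'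
    have hmem : (EX' \ EY', EY' \ EX', EZ' ∪ EX' ∩ EY') ∈ S := by
      simp only [S, Finset.mem_filter, Finset.mem_univ, true_and]
      exact ⟨hf'', d1, d2, d3⟩
    have := htmin _ hmem
    simp only at this
    have hnn : 0 ≤ ((EX' ∩ EY').card : ℝ) * θ :=
      mul_nonneg (by positivity) hθ
    calc lagObj n p k C cbar θ t.1 t.2.1 t.2.2
        ≤ lagObj n p k C cbar θ (EX' \ EY') (EY' \ EX') (EZ' ∪ EX' ∩ EY') := this
      _ = lagObj n p k C cbar θ EX' EY' EZ' - ((EX' ∩ EY').card : ℝ) * θ := hobj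
      _ ≤ lagObj n p k C cbar θ EX' EY' EZ' := by linarith
  · -- the modification decreases the objective by θ
    intro EX EY EZ i hf hiX hiY _
    obtain ⟨hx, hy, hxz, hyz⟩ := hf
    have hiZ : i ∉ EZ := by
      intro h
      have : i ∈ EX ∩ EZ := Finset.mem_inter.mpr ⟨hiX, h⟩
      simp [hxz] at this
    unfold lagObj
    have sx : ∑ j ∈ EX \ {i}, C j = ∑ j ∈ EX, C j - C i := by
      rw [Finset.sum_sdiff_eq_sub (Finset.singleton_subset_iff.mpr hiX),
        Finset.sum_singleton]
    have sy : ∑ j ∈ EY \ {i}, cbar j = ∑ j ∈ EY, cbar j - cbar i := by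
      rw [Finset.sum_sdiff_eq_sub (Finset.singleton_subset_iff.mpr hiY),
        Finset.sum_singleton]
    have sz : ∑ j ∈ EZ ∪ {i}, (C j + cbar j - θ)
        = ∑ j ∈ EZ, (C j + cbar j - θ) + (C i + cbar i - θ) := by
      rw [Finset.sum_union (by simpa using hiZ), Finset.sum_singleton]
    rw [sx, sy, sz]
    linarith
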